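/- Let L_{α,n} be the n×n matrix with entries L[1,1] = 1+conj(α), L[n,n] = 1+α, L[k,k] = 2 for 2 ≤ k ≤ n-1, L[k,k+1] = L[k+1,k] = -1 for 1 ≤ k ≤ n-1, L[1,n] = -conj(α), L[n,1] = -α, and all other entries 0. Then for every complex α and every n ≥ 3, the characteristic polynomial of L_{α,n} satisfies det(λI - L_{α,n}) = (λ - 2·Re(α))·U_{n-1}((λ-2)/2) - 2·Re(α)·U_{n-2}((λ-2)/2) + 2·(-1)^{n+1}·Re(α), where U_k denotes the k-th Chebyshev polynomial of the second kind. In particular, the characteristic polynomial depends only on Re(α). -/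

import Mathlib

open Matrix Polynomial

namespace CycleAux

def triMat (d : ℕ → ℂ) (n : ℕ) : Matrix (Fin n) (Fin n) ℂ :=
  Matrix.of fun i j =>
    if (i : ℕ) = (j : ℕ) then d i
    else if (i : ℕ) + 1 = (j : ℕ) ∨ (j : ℕ) + 1 = (i : ℕ) then 1 else 0

lemma tri_sub_ss (d : ℕ → ℂ) (n : ℕ) :
    (triMat d (n + 1)).submatrix Fin.succ Fin.succ = triMat (fun i => d (i + 1)) n := by
  ext i j
  simp only [submatrix_apply, triMat, Matrix.of_apply, Fin.val_succ]
  exact if_congr (by omega) rfl (if_congr (by omega) rfl rfl)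

lemma tri_sub_cc (d : ℕ → ℂ) (n : ℕ) :
    (triMat d (n + 1)).submatrix Fin.castSucc Fin.castSucc = triMat d n := by
  ext i j
  simp only [submatrix_apply, triMat, Matrix.of_apply, Fin.coe_castSucc]

lemma triMat_congr {d d' : ℕ → ℂ} {n : ℕ} (h : ∀ i < n, d i = d' i) :
    triMat d n = triMat d' n := by
  ext i j
  simp only [triMat, Matrix.of_apply]
  rw [h i i.isLt]

lemma det_triMat_step (d : ℕ → ℂ) (n : ℕ) :
    (triMat d (n + 2)).det
      = d 0 * (triMat (fun i => d (i + 1)) (n + 1)).det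
        - (triMat (fun i => d (i + 2)) n).det := by
  rw [det_succ_row_zero, Fin.sum_univ_succ, Fin.sum_univ_succ]
  have h00 : triMat d (n + 2) 0 0 = d 0 := by simp [triMat]
  have h01 : triMat d (n + 2) 0 (Fin.succ (0 : Fin (n + 1))) = 1 := by
    have hv : ((Fin.succ (0 : Fin (n + 1))) : ℕ) = 1 := by simp
    simp only [triMat, Matrix.of_apply, Fin.val_zero, hv]
    norm_num
  have hz : ∀ i : Fin n, triMat d (n + 2) 0 i.succ.succ = 0 := fun i => by
    simp only [triMat, Matrix.of_apply, Fin.val_zero, Fin.val_succ]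
    exact (if_neg (by omega)).trans (if_neg (by omega))
  have hsub1 : ((triMat d (n + 2)).submatrix Fin.succ (Fin.succAbove 0)).det
      = (triMat (fun i => d (i + 1)) (n + 1)).det := by
    rw [Fin.succAbove_zero, tri_sub_ss]
  have key : ((triMat d (n + 2)).submatrix Fin.succ (Fin.succ (0 : Fin (n + 1))).succAbove).det
      = (triMat (fun i => d (i + 2)) n).det := by
    rw [det_succ_column_zero, Fin.sum_univ_succ]
    have e1 : (triMat d (n + 2)).submatrix Fin.succ (Fin.succ (0 : Fin (n + 1))).succAbove 0 0
        = 1 := by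
      simp only [submatrix_apply, Fin.succ_succAbove_zero]
      have hv : ((Fin.succ (0 : Fin (n + 1))) : ℕ) = 1 := by simp
      simp only [triMat, Matrix.of_apply, hv, Fin.val_zero]
      norm_num
    have ez : ∀ i : Fin n,
        (triMat d (n + 2)).submatrix Fin.succ (Fin.succ (0 : Fin (n + 1))).succAbove i.succ 0
          = 0 := fun i => by
      simp only [submatrix_apply, Fin.succ_succAbove_zero]
      simp only [triMat, Matrix.of_apply, Fin.val_succ, Fin.val_zero]
      exact (if_neg (by omega)).trans (if_neg (by omega))
    have esub : (((triMat d (n + 2)).submatrix Fin.succ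
          (Fin.succ (0 : Fin (n + 1))).succAbove).submatrix
            (Fin.succAbove 0) Fin.succ).det = (triMat (fun i => d (i + 2)) n).det := by
      rw [Fin.succAbove_zero, submatrix_submatrix]
      have hc : ((Fin.succ (0 : Fin (n + 1))).succAbove ∘ Fin.succ)
          = (Fin.succ ∘ Fin.succ : Fin n → Fin (n + 2)) := by
        funext j
        simp [Fin.succ_succAbove_succ]
      rw [hc, ← submatrix_submatrix, tri_sub_ss, tri_sub_ss]
    simp only [e1, ez, esub, Fin.val_zero, pow_zero, one_mul, mul_one, mul_zero, zero_mul,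
      Finset.sum_const_zero, add_zero]
  simp only [h00, h01, hz, key, hsub1, Fin.val_zero, Fin.val_succ, pow_zero, pow_one, one_mul,
    mul_one, mul_zero, zero_mul, Finset.sum_const_zero, add_zero]
  ring

lemma chebU (x : ℂ) (k : ℤ) :
    (Chebyshev.U ℂ (k + 2)).eval (x / 2)
      = x * (Chebyshev.U ℂ (k + 1)).eval (x / 2) - (Chebyshev.U ℂ k).eval (x / 2) := by
  rw [Chebyshev.U_add_two]
  simp only [eval_sub, eval_mul, eval_ofNat, eval_X]
  ring

lemma detD (x : ℂ) : ∀ n : ℕ,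
    (triMat (fun _ => x) n).det = (Chebyshev.U ℂ (n : ℤ)).eval (x / 2) := by
  intro n
  induction n using Nat.twoStepInduction with
  | zero => simp [Matrix.det_fin_zero]
  | one =>
    rw [Matrix.det_fin_one]
    simp only [triMat, Matrix.of_apply]
    norm_num
    ring
  | more n ih1 ih2 =>
    rw [det_triMat_step, ih1, ih2]
    have : ((n + 2 : ℕ) : ℤ) = (n : ℤ) + 2 := by push_cast; ring
    rw [this, chebU]
    have : ((n + 1 : ℕ) : ℤ) = (n : ℤ) + 1 := by push_cast; ring
    rw [this]

lemma detG (x : ℂ) : ∀ n : ℕ,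
    (triMat (fun i => if i = n then x + 1 else x) (n + 1)).det
      = (Chebyshev.U ℂ ((n : ℤ) + 1)).eval (x / 2) + (Chebyshev.U ℂ (n : ℤ)).eval (x / 2) := by
  intro n
  induction n using Nat.twoStepInduction with
  | zero =>
    rw [Matrix.det_fin_one]
    simp only [triMat, Matrix.of_apply]
    norm_num
    ring
  | one =>
    rw [Matrix.det_fin_two]
    simp only [triMat, Matrix.of_apply]
    norm_num [Chebyshev.U_two]
    ring
  | more n ih1 ih2 =>
    rw [det_triMat_step]
    have e1 : (fun i => if i + 1 = n + 2 then x + 1 else x) = fun i => if i = n + 1 then x + 1 else x := by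
      funext i; exact if_congr (by omega) rfl rfl
    have e2 : (fun i => if i + 2 = n + 2 then x + 1 else x) = fun i => if i = n then x + 1 else x := by
      funext i; exact if_congr (by omega) rfl rfl
    have e0 : (if (0 : ℕ) = n + 2 then x + 1 else x) = x := by rw [if_neg (by omega)]
    rw [e0, e1, e2, ih1, ih2]
    have h1 := chebU x ((n : ℤ) + 1)
    have h2 := chebU x (n : ℤ)
    push_cast
    simp only [show ((n : ℤ) + 2 + 1) = (n : ℤ) + 3 from by ring,
      show ((n : ℤ) + 1 + 2) = (n : ℤ) + 3 from by ring,
      show ((n : ℤ) + 1 + 1) = (n : ℤ) + 2 from by ring] at h1 h2 ⊢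
    linear_combination -h1 - h2

lemma detE (x : ℂ) (n : ℕ) :
    (triMat (fun i => if i = 0 then x + 1 else x) (n + 2)).det
      = (Chebyshev.U ℂ ((n : ℤ) + 2)).eval (x / 2)
        + (Chebyshev.U ℂ ((n : ℤ) + 1)).eval (x / 2) := by
  rw [det_triMat_step]
  have e1 : (fun i : ℕ => if i + 1 = 0 then x + 1 else x) = fun _ => x := by
    funext i; rw [if_neg (by omega)]
  have e2 : (fun i : ℕ => if i + 2 = 0 then x + 1 else x) = fun _ => x := by
    funext i; rw [if_neg (by omega)]
  rw [if_pos rfl, e1, e2, detD, detD]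
  have h2 := chebU x (n : ℤ)
  push_cast
  linear_combination -h2

lemma detF (x : ℂ) (m : ℕ) :
    (triMat (fun i => if i = 0 ∨ i = m + 2 then x + 1 else x) (m + 3)).det
      = (x + 2) * (Chebyshev.U ℂ ((m : ℤ) + 2)).eval (x / 2) := by
  rw [det_triMat_step]
  have e0 : (if (0 : ℕ) = 0 ∨ (0 : ℕ) = m + 2 then x + 1 else x) = x + 1 := by
    rw [if_pos (Or.inl rfl)]
  have e1 : (fun i : ℕ => if i + 1 = 0 ∨ i + 1 = m + 2 then x + 1 else x)
      = fun i => if i = m + 1 then x + 1 else x := by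
    funext i; exact if_congr (by omega) rfl rfl
  have e2 : (fun i : ℕ => if i + 2 = 0 ∨ i + 2 = m + 2 then x + 1 else x)
      = fun i => if i = m then x + 1 else x := by
    funext i; exact if_congr (by omega) rfl rfl
  rw [e0, e1, e2, detG x (m + 1), detG x m]
  have h1 := chebU x (m : ℤ)
  push_cast
  simp only [show ((m : ℤ) + 1 + 1) = (m : ℤ) + 2 from by ring] at *
  linear_combination -h1

lemma det_lowShift (d : ℕ → ℂ) (n : ℕ) :
    ((triMat d (n + 1)).submatrix Fin.castSucc Fin.succ).det = 1 := by
  rw [Matrix.det_of_lowerTriangular]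
  · rw [Finset.prod_congr rfl (fun i _ => ?_), Finset.prod_const_one]
    show triMat d (n + 1) i.castSucc i.succ = 1
    simp only [triMat, Matrix.of_apply, Fin.coe_castSucc, Fin.val_succ]
    rw [if_neg (by omega)]
    simp
  · intro i j h
    have hij : (i : ℕ) < (j : ℕ) := OrderDual.toDual_lt_toDual.mp h
    show triMat d (n + 1) i.castSucc j.succ = 0
    simp only [triMat, Matrix.of_apply, Fin.coe_castSucc, Fin.val_succ]
    rw [if_neg (by omega), if_neg (by omega)]

lemma det_upShift (d : ℕ → ℂ) (n : ℕ) :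
    ((triMat d (n + 1)).submatrix Fin.succ Fin.castSucc).det = 1 := by
  rw [Matrix.det_of_upperTriangular]
  · rw [Finset.prod_congr rfl (fun i _ => ?_), Finset.prod_const_one]
    show triMat d (n + 1) i.succ i.castSucc = 1
    simp only [triMat, Matrix.of_apply, Fin.coe_castSucc, Fin.val_succ]
    rw [if_neg (by omega)]
    simp
  · intro i j h
    have hij : (j : ℕ) < (i : ℕ) := h
    show triMat d (n + 1) i.succ j.castSucc = 0
    simp only [triMat, Matrix.of_apply, Fin.coe_castSucc, Fin.val_succ]
    rw [if_neg (by omega), if_neg (by omega)]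

def vRow (m : ℕ) : Fin (m + 3) → ℂ :=
  fun j => if (j : ℕ) = 0 then -1 else if (j : ℕ) = m + 2 then 1 else 0

lemma detC0 (x : ℂ) (m : ℕ) :
    ((triMat (fun i => if i = 0 ∨ i = m + 2 then x + 1 else x) (m + 3)).updateRow 0
        (vRow m)).det
      = -((Chebyshev.U ℂ ((m : ℤ) + 2)).eval (x / 2)
            + (Chebyshev.U ℂ ((m : ℤ) + 1)).eval (x / 2)) + (-1) ^ (m + 2) := by
  set B := triMat (fun i => if i = 0 ∨ i = m + 2 then x + 1 else x) (m + 3) with hB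
  have hsub : ∀ g : Fin (m + 2) → Fin (m + 3),
      (B.updateRow 0 (vRow m)).submatrix Fin.succ g = B.submatrix Fin.succ g := by
    intro g; ext a b
    simp [Matrix.submatrix_apply, Matrix.updateRow_ne (Fin.succ_ne_zero a)]
  rw [det_succ_row_zero, Fin.sum_univ_succ]
  have h0 : (B.updateRow 0 (vRow m)) 0 = vRow m := Matrix.updateRow_self
  have hv0 : vRow m 0 = -1 := by simp [vRow]
  have hterm0 : ((B.updateRow 0 (vRow m)).submatrix Fin.succ (Fin.succAbove 0)).det
      = (Chebyshev.U ℂ ((m : ℤ) + 2)).eval (x / 2)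
        + (Chebyshev.U ℂ ((m : ℤ) + 1)).eval (x / 2) := by
    rw [hsub, Fin.succAbove_zero, hB, tri_sub_ss]
    rw [triMat_congr (d' := fun i => if i = m + 1 then x + 1 else x)
      (fun i _ => if_congr (by omega) rfl rfl)]
    have := detG x (m + 1)
    rw [this]
    push_cast
    ring
  have hrest : ∑ j : Fin (m + 2),
      (-1 : ℂ) ^ ((j.succ : Fin (m + 3)) : ℕ) * (B.updateRow 0 (vRow m)) 0 j.succ *
        ((B.updateRow 0 (vRow m)).submatrix Fin.succ (Fin.succAbove j.succ)).det
      = (-1) ^ (m + 2) := by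
    rw [Finset.sum_eq_single_of_mem (Fin.last (m + 1)) (Finset.mem_univ _)]
    · have hval : (((Fin.last (m + 1)).succ : Fin (m + 3)) : ℕ) = m + 2 := by
        rw [Fin.succ_last]; simp
      have hv : vRow m (Fin.last (m + 1)).succ = 1 := by
        simp only [vRow, hval]
        rw [if_neg (by omega)]
        simp
      rw [h0, hv, hval, hsub]
      rw [Fin.succ_last, Fin.succAbove_last, hB, det_upShift]
      ring
    · intro b _ hb
      have hbv : (b : ℕ) < m + 1 := by
        have h1 := b.isLt
        have h2 : (b : ℕ) ≠ m + 1 := fun hh =>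
          hb (Fin.ext (by rw [Fin.val_last]; exact hh))
        omega
      have hv : vRow m b.succ = 0 := by
        simp only [vRow, Fin.val_succ]
        rw [if_neg (by omega), if_neg (by omega)]
      rw [h0, hv]
      ring
  rw [hrest, h0, hv0, hterm0]
  simp only [Fin.val_zero, pow_zero]
  ring

lemma detCN (x : ℂ) (m : ℕ) :
    ((triMat (fun i => if i = 0 ∨ i = m + 2 then x + 1 else x) (m + 3)).updateRow
        (Fin.last (m + 2)) (-vRow m)).det
      = (-1) ^ (m + 2)
        - ((Chebyshev.U ℂ ((m : ℤ) + 2)).eval (x / 2)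
            + (Chebyshev.U ℂ ((m : ℤ) + 1)).eval (x / 2)) := by
  set B := triMat (fun i => if i = 0 ∨ i = m + 2 then x + 1 else x) (m + 3) with hB
  set A := B.updateRow (Fin.last (m + 2)) (-vRow m) with hA
  have hsub : ∀ g : Fin (m + 2) → Fin (m + 3),
      A.submatrix Fin.castSucc g = B.submatrix Fin.castSucc g := by
    intro g; ext a b
    simp [hA, Matrix.submatrix_apply,
      Matrix.updateRow_ne (Fin.ne_of_lt (Fin.castSucc_lt_last a))]
  rw [Matrix.det_succ_row A (Fin.last (m + 2)), Fin.sum_univ_succ]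
  have hrow : A (Fin.last (m + 2)) = -vRow m := Matrix.updateRow_self
  have hv0 : (-vRow m) (0 : Fin (m + 3)) = 1 := by simp [vRow]
  have hvlast : (-vRow m) (Fin.last (m + 1)).succ = -1 := by
    have hval : (((Fin.last (m + 1)).succ : Fin (m + 3)) : ℕ) = m + 2 := by
      rw [Fin.succ_last]; simp
    simp only [Pi.neg_apply, vRow, hval]
    rw [if_neg (by omega)]
    simp
  have hterm0 : (A.submatrix (Fin.last (m + 2)).succAbove (Fin.succAbove 0)).det = 1 := by
    rw [Fin.succAbove_last, hsub, Fin.succAbove_zero, hB, det_lowShift]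
  have htermlast :
      (A.submatrix (Fin.last (m + 2)).succAbove (Fin.succAbove (Fin.last (m + 1)).succ)).det
        = (Chebyshev.U ℂ ((m : ℤ) + 2)).eval (x / 2)
          + (Chebyshev.U ℂ ((m : ℤ) + 1)).eval (x / 2) := by
    rw [Fin.succAbove_last, hsub, Fin.succ_last, Fin.succAbove_last, hB, tri_sub_cc]
    rw [triMat_congr (d' := fun i => if i = 0 then x + 1 else x)
      (fun i hi => if_congr (by omega) rfl rfl)]
    exact detE x m
  have hrest : ∑ j : Fin (m + 2),
      (-1 : ℂ) ^ (((Fin.last (m + 2)) : ℕ) + ((j.succ : Fin (m + 3)) : ℕ)) *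
          A (Fin.last (m + 2)) j.succ *
        (A.submatrix (Fin.last (m + 2)).succAbove (Fin.succAbove j.succ)).det
      = -((Chebyshev.U ℂ ((m : ℤ) + 2)).eval (x / 2)
          + (Chebyshev.U ℂ ((m : ℤ) + 1)).eval (x / 2)) := by
    rw [Finset.sum_eq_single_of_mem (Fin.last (m + 1)) (Finset.mem_univ _)]
    · have hval : (((Fin.last (m + 1)).succ : Fin (m + 3)) : ℕ) = m + 2 := by
        rw [Fin.succ_last]; simp
      rw [hrow, hvlast, htermlast, hval, Fin.val_last]
      have hpow : (-1 : ℂ) ^ (m + 2 + (m + 2)) = 1 := by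
        have : m + 2 + (m + 2) = 2 * (m + 2) := by ring
        rw [this, pow_mul]
        norm_num
      rw [hpow]
      ring
    · intro b _ hb
      have h1 := b.isLt
      have h2 : (b : ℕ) ≠ m + 1 := fun hh =>
        hb (Fin.ext (by rw [Fin.val_last]; exact hh))
      have hv : (-vRow m) b.succ = 0 := by
        simp only [Pi.neg_apply, vRow, Fin.val_succ]
        rw [if_neg (by omega), if_neg (by omega)]
        simp
      rw [hrow, hv]
      ring
  rw [hrest, hrow, hv0, hterm0, Fin.val_last, Fin.val_zero]
  ring

set_option maxHeartbeats 2000000 in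
set_option maxRecDepth 8000 in
lemma matrix_decomp (m : ℕ) (α : ℂ) (L : Matrix (Fin (m+3)) (Fin (m+3)) ℂ)
    (hL : ∀ i j : Fin (m+3), L i j =
      if i = j then
        (if (i : ℕ) = 0 then 1 + (starRingEnd ℂ) α
         else if (i : ℕ) = m + 3 - 1 then 1 + α else 2)
      else if (i : ℕ) + 1 = (j : ℕ) ∨ (j : ℕ) + 1 = (i : ℕ) then -1
      else if (i : ℕ) = 0 ∧ (j : ℕ) = m + 3 - 1 then -(starRingEnd ℂ) α
      else if (i : ℕ) = m + 3 - 1 ∧ (j : ℕ) = 0 then -α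
      else 0) (lam : ℂ) :
    lam • (1 : Matrix (Fin (m+3)) (Fin (m+3)) ℂ) - L
      = ((triMat (fun i => if i = 0 ∨ i = m + 2 then (lam - 2) + 1 else (lam - 2))
            (m + 3)).updateRow 0
            ((triMat (fun i => if i = 0 ∨ i = m + 2 then (lam - 2) + 1 else (lam - 2)) (m + 3)) 0
              + (starRingEnd ℂ) α • vRow m)).updateRow (Fin.last (m + 2))
            ((triMat (fun i => if i = 0 ∨ i = m + 2 then (lam - 2) + 1 else (lam - 2)) (m + 3))
                (Fin.last (m + 2)) + α • (-vRow m)) := by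
  ext i j
  simp only [Matrix.sub_apply, Matrix.smul_apply, Matrix.one_apply, smul_eq_mul, mul_ite,
    mul_one, mul_zero, hL i j, Matrix.updateRow_apply, Pi.add_apply, Pi.smul_apply,
    Pi.neg_apply, vRow, triMat, Matrix.of_apply, Fin.ext_iff, Fin.val_last, Fin.val_zero]
  split_ifs <;>
    first
      | rfl
      | ring1
      | omega
      | (exfalso; clear hL L; simp only [true_or, or_true, or_false, false_or, not_true,
          not_false_iff] at *; all_goals omega)

lemma updateRow_comm (M : Matrix (Fin k) (Fin k) ℂ) {i j : Fin k} (h : i ≠ j)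
    (r s : Fin k → ℂ) :
    (M.updateRow i r).updateRow j s = (M.updateRow j s).updateRow i r := by
  ext a b
  simp only [Matrix.updateRow_apply]
  split_ifs with h1 h2
  · exact absurd (h2.symm.trans h1) h
  all_goals rfl

end CycleAux

open CycleAux in
/-- The characteristic polynomial of the complex laplacian matrix `L_{α,n}` of the weighted
`n`-cycle (one edge of weight `α`) is
`(λ - 2 Re α)·U_{n-1}((λ-2)/2) - 2 Re α·U_{n-2}((λ-2)/2) + 2(-1)^{n+1} Re α`;
in particular it depends only on `Re α`. -/
theorem charpoly_laplacian_cycle (n : ℕ) (hn : 3 ≤ n) (α : ℂ)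
    (L : Matrix (Fin n) (Fin n) ℂ)
    (hL : ∀ i j : Fin n, L i j =
      if i = j then
        (if (i : ℕ) = 0 then 1 + (starRingEnd ℂ) α
         else if (i : ℕ) = n - 1 then 1 + α else 2)
      else if (i : ℕ) + 1 = (j : ℕ) ∨ (j : ℕ) + 1 = (i : ℕ) then -1
      else if (i : ℕ) = 0 ∧ (j : ℕ) = n - 1 then -(starRingEnd ℂ) α
      else if (i : ℕ) = n - 1 ∧ (j : ℕ) = 0 then -α
      else 0) :
    ∀ lam : ℂ,
      (lam • (1 : Matrix (Fin n) (Fin n) ℂ) - L).det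
        = (lam - 2 * (α.re : ℂ)) * (Chebyshev.U ℂ ((n : ℤ) - 1)).eval ((lam - 2) / 2)
          - 2 * (α.re : ℂ) * (Chebyshev.U ℂ ((n : ℤ) - 2)).eval ((lam - 2) / 2)
          + 2 * (-1) ^ (n + 1) * (α.re : ℂ) := by
  obtain ⟨m, rfl⟩ : ∃ m, n = m + 3 := ⟨n - 3, by omega⟩
  intro lam
  rw [matrix_decomp m α L hL lam]
  set B := triMat (fun i => if i = 0 ∨ i = m + 2 then (lam - 2) + 1 else (lam - 2)) (m + 3)
    with hB
  set c := (starRingEnd ℂ) α with hc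
  have h0l : (0 : Fin (m + 3)) ≠ Fin.last (m + 2) := by
    intro h
    have h' := congrArg Fin.val h
    rw [Fin.val_zero, Fin.val_last] at h'
    omega
  set A1 := B.updateRow 0 (B 0 + c • vRow m) with hA1
  rw [show B (Fin.last (m + 2)) = A1 (Fin.last (m + 2)) from
    (Matrix.updateRow_ne (Ne.symm h0l)).symm]
  rw [Matrix.det_updateRow_add A1 (Fin.last (m + 2)) (A1 (Fin.last (m + 2))) (α • (-vRow m))]
  rw [Matrix.updateRow_eq_self, Matrix.det_updateRow_smul]
  rw [hA1, Matrix.det_updateRow_add B 0 (B 0) (c • vRow m)]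
  rw [Matrix.updateRow_eq_self, Matrix.det_updateRow_smul]
  have hzero : ((B.updateRow 0 (vRow m)).updateRow (Fin.last (m + 2)) (-vRow m)).det = 0 := by
    have hneg : -vRow m = (-1 : ℂ) • vRow m := by funext j; simp
    rw [hneg, Matrix.det_updateRow_smul]
    have hz : ((B.updateRow 0 (vRow m)).updateRow (Fin.last (m + 2)) (vRow m)).det = 0 :=
      Matrix.det_zero_of_row_eq h0l
        (by rw [Matrix.updateRow_ne h0l, Matrix.updateRow_self, Matrix.updateRow_self])
    rw [hz, mul_zero]
  rw [CycleAux.updateRow_comm B h0l (B 0 + c • vRow m) (-vRow m)]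
  rw [show B 0 = (B.updateRow (Fin.last (m + 2)) (-vRow m)) 0 from
    (Matrix.updateRow_ne h0l).symm]
  rw [Matrix.det_updateRow_add (B.updateRow (Fin.last (m + 2)) (-vRow m)) 0
    ((B.updateRow (Fin.last (m + 2)) (-vRow m)) 0) (c • vRow m)]
  rw [Matrix.updateRow_eq_self, Matrix.det_updateRow_smul]
  rw [CycleAux.updateRow_comm B (Ne.symm h0l) (-vRow m) (vRow m), hzero, mul_zero, add_zero]
  rw [hB, detF (lam - 2) m, detC0 (lam - 2) m, detCN (lam - 2) m]
  rw [show ((m + 3 : ℕ) : ℤ) - 1 = (m : ℤ) + 2 from by push_cast; ring]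
  rw [show ((m + 3 : ℕ) : ℤ) - 2 = (m : ℤ) + 1 from by push_cast; ring]
  have hca : c + α = 2 * (α.re : ℂ) := by
    rw [hc, add_comm, Complex.add_conj]
    push_cast
    ring
  linear_combination ((-1 : ℂ) ^ (m + 2)
      - (Chebyshev.U ℂ ((m : ℤ) + 2)).eval ((lam - 2) / 2)
      - (Chebyshev.U ℂ ((m : ℤ) + 1)).eval ((lam - 2) / 2)) * hca
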